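/- arXiv:2108.01209 — 3 statements merged into one kernel-verified Lean document; each statement's English description precedes it below -/
import Mathlib

section
/- Let q ≡ 3 (mod 4) be an odd prime power with q ≠ 3 and let β ∈ NQR(q)\{−1}. Then S_β = {{x, xβ} : x ∈ QR(q)} is a strong starter for the additive group of F_q. -/
open SimpleGraph

namespace Paper

variable {V : Type*} {Γ : Type*} {F : Type*}

/-- A one-factor on vertex set `V`: a perfect matching, i.e. every vertex has a
unique neighbour. -/
def IsOneFactor (G : SimpleGraph V) : Prop :=
  ∀ v : V, ∃! w : V, G.Adj v w

/-- A one-factorization of the complete graph on `V`: a set of one-factors that are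
pairwise edge-disjoint and whose edges cover all edges of the complete graph. -/
def IsOneFactorization (𝓕 : Set (SimpleGraph V)) : Prop :=
  (∀ G ∈ 𝓕, IsOneFactor G) ∧
  (∀ G ∈ 𝓕, ∀ H ∈ 𝓕, G ≠ H → Disjoint G.edgeSet H.edgeSet) ∧
  (∀ u v : V, u ≠ v → ∃ G ∈ 𝓕, G.Adj u v)

/-- Two one-factorizations of the complete graph are orthogonal if any two of their
members share at most one edge. -/
def AreOrthogonalFactorizations (𝓕 𝓖 : Set (SimpleGraph V)) : Prop :=
  IsOneFactorization 𝓕 ∧ IsOneFactorization 𝓖 ∧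
    ∀ G ∈ 𝓕, ∀ H ∈ 𝓖, (G.edgeSet ∩ H.edgeSet).Subsingleton

/-- `s` is the vertex set of a cycle of length four in `H`. -/
def IsFourCycleOn (H : SimpleGraph V) (s : Set V) : Prop :=
  ∃ a b c d : V, a ≠ b ∧ a ≠ c ∧ a ≠ d ∧ b ≠ c ∧ b ≠ d ∧ c ≠ d ∧
    s = {a, b, c, d} ∧ H.Adj a b ∧ H.Adj b c ∧ H.Adj c d ∧ H.Adj d a

/-- The number of (vertex sets of) cycles of length four contained in `H`. -/
noncomputable def fourCycleCount (H : SimpleGraph V) : ℕ :=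
  Set.ncard {s : Set V | IsFourCycleOn H s}

/-- The set of nonzero squares (quadratic residues) of a field. -/
def QRset (F : Type*) [Field F] : Set F := {x | x ≠ 0 ∧ IsSquare x}

/-- The set of non-squares (quadratic non-residues) of a field. -/
def NQRset (F : Type*) [Field F] : Set F := {x | ¬ IsSquare x}

/-- Horton's starter `S_β = {{x, xβ} : x ∈ QR(q)}`, as a set of unordered pairs. -/
def hortonStarter [Field F] (β : F) : Set (Sym2 F) :=
  {e | ∃ x : F, x ≠ 0 ∧ IsSquare x ∧ e = s(x, x * β)}

/-- `-S_β = {{y, yβ} : y ∈ NQR(q)}`, as a set of unordered pairs. -/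
def hortonNegStarter [Field F] (β : F) : Set (Sym2 F) :=
  {e | ∃ y : F, ¬ IsSquare y ∧ e = s(y, y * β)}

/-- The one-factor `F_γ = {{∞, γ}} ∪ {{x + γ, y + γ} : {x, y} ∈ S}` of the complete
graph on `Γ ∪ {∞}` (with `∞ = none`) obtained by translating the starter `S` by `γ`. -/
def starterFactor [AddCommGroup Γ] (S : Set (Sym2 Γ)) (γ : Γ) : SimpleGraph (Option Γ) :=
  SimpleGraph.fromEdgeSet
    ({s((none : Option Γ), some γ)} ∪ (Sym2.map (fun x => some (x + γ)) '' S))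

/-- A starter for an additive abelian group: every nonzero element of the group
appears in exactly one pair, all elements appearing in pairs are nonzero, and every
nonzero difference arises from exactly one ordered pair. -/
def IsStarter [AddCommGroup Γ] (S : Set (Sym2 Γ)) : Prop :=
  (∀ z : Γ, z ≠ 0 → ∃! e : Sym2 Γ, e ∈ S ∧ z ∈ e) ∧
  (∀ e ∈ S, ∀ z ∈ e, z ≠ (0 : Γ)) ∧
  (∀ d : Γ, d ≠ 0 → ∃! p : Γ × Γ, s(p.1, p.2) ∈ S ∧ p.1 - p.2 = d)

/-- A strong starter: a starter whose pair sums are nonzero and pairwise distinct. -/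
def IsStrongStarter [AddCommGroup Γ] (S : Set (Sym2 Γ)) : Prop :=
  IsStarter S ∧
  (∀ x y : Γ, s(x, y) ∈ S → x + y ≠ 0) ∧
  (∀ x y u v : Γ, s(x, y) ∈ S → s(u, v) ∈ S → x + y = u + v → s(x, y) = s(u, v))

/-- Two starters are orthogonal if, writing `(x_d, y_d) ∈ S` and `(u_d, v_d) ∈ T`
for the ordered pairs with difference `d ≠ 0`, one has `u_d ≠ x_d` for all `d`, and
`u_d - x_d = u_e - x_e` implies `d = e`. -/
def AreOrthogonalStarters [AddCommGroup Γ] (S T : Set (Sym2 Γ)) : Prop :=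
  (∀ d x y u v : Γ, d ≠ 0 → s(x, y) ∈ S → s(u, v) ∈ T → x - y = d → u - v = d → u ≠ x) ∧
  (∀ d e x y u v x' y' u' v' : Γ, d ≠ 0 → e ≠ 0 →
    s(x, y) ∈ S → s(u, v) ∈ T → x - y = d → u - v = d →
    s(x', y') ∈ S → s(u', v') ∈ T → x' - y' = e → u' - v' = e →
    u - x = u' - x' → d = e)

/-- If `q ≡ 3 (mod 4)` is an odd prime power with `q ≠ 3` and
`β ∈ NQR(q) \ {-1}`, then `S_β = {{x, xβ} : x ∈ QR(q)}` is a strong starter for the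
additive group of `F_q`. -/
theorem statement_13 {F : Type*} [Field F] [Fintype F] (q : ℕ)
    (hcard : Fintype.card F = q) (hq4 : q % 4 = 3) (hq3 : q ≠ 3)
    (β : F) (hβ : ¬ IsSquare β) (hβ1 : β ≠ -1) :
    IsStrongStarter (hortonStarter β) := by
  classical
  have hm1 : ¬ IsSquare (-1 : F) := by
    rw [FiniteField.isSquare_neg_one_iff, hcard]; simp [hq4]
  have hβ0 : β ≠ 0 := fun h => hβ (h ▸ IsSquare.zero)
  have hβone : β ≠ 1 := fun h => hβ (h ▸ IsSquare.one)
  have hmul : ∀ a b : F, a ≠ 0 → b ≠ 0 → (IsSquare (a * b) ↔ (IsSquare a ↔ IsSquare b)) := by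
    intro a b ha hb
    have hab : a * b ≠ 0 := mul_ne_zero ha hb
    rw [← quadraticChar_one_iff_isSquare hab, ← quadraticChar_one_iff_isSquare ha,
        ← quadraticChar_one_iff_isSquare hb, map_mul]
    rcases quadraticChar_dichotomy ha with h1 | h1 <;>
      rcases quadraticChar_dichotomy hb with h2 | h2 <;> rw [h1, h2] <;> norm_num
  have hneg : ∀ a : F, a ≠ 0 → (IsSquare (-a) ↔ ¬ IsSquare a) := by
    intro a ha
    have := hmul (-1) a (by norm_num) ha
    rw [neg_one_mul] at this
    rw [this]; tauto
  have hxβ : ∀ x : F, x ≠ 0 → IsSquare x → ¬ IsSquare (x * β) := by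
    intro x hx hsq h
    exact hβ (((hmul x β hx hβ0).mp h).mp hsq)
  -- elements of pairs are nonzero, second is nonsquare
  refine ⟨⟨?_, ?_, ?_⟩, ?_, ?_⟩
  · -- unique pair containing each nonzero z
    intro z hz
    by_cases hzs : IsSquare z
    · refine ⟨s(z, z * β), ⟨⟨z, hz, hzs, rfl⟩, by simp⟩, ?_⟩
      rintro e ⟨⟨x, hx, hxs, rfl⟩, hze⟩
      rw [Sym2.mem_iff] at hze
      rcases hze with rfl | rfl
      · rfl
      · exact absurd hzs (hxβ x hx hxs)
    · have hβinv : ¬ IsSquare (β⁻¹ : F) := by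
        rintro ⟨r, hr⟩
        exact hβ ⟨r⁻¹, by rw [← mul_inv, ← hr, inv_inv]⟩
      have hβinv0 : (β⁻¹ : F) ≠ 0 := inv_ne_zero hβ0
      have hx : z * β⁻¹ ≠ 0 := mul_ne_zero hz hβinv0
      have hxs : IsSquare (z * β⁻¹) := by
        by_contra h
        exact h (((hmul z β⁻¹ hz hβinv0).symm.mp (iff_of_false hzs hβinv)))
      have hxb : z * β⁻¹ * β = z := by field_simp
      refine ⟨s(z * β⁻¹, z * β⁻¹ * β), ⟨⟨z * β⁻¹, hx, hxs, rfl⟩, by rw [hxb]; simp⟩, ?_⟩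
      rintro e ⟨⟨x, hx', hxs', rfl⟩, hze⟩
      rw [Sym2.mem_iff] at hze
      rcases hze with rfl | hze
      · exact absurd hxs' hzs
      · have : x = z * β⁻¹ := by rw [hze, mul_inv_cancel_right₀ hβ0]
        rw [this, hxb]
  · -- nonzero
    rintro e ⟨x, hx, hxs, rfl⟩ z hze
    rw [Sym2.mem_iff] at hze
    rcases hze with rfl | rfl
    · exact hx
    · exact mul_ne_zero hx hβ0
  · -- differences
    intro d hd
    have hc : (1 : F) - β ≠ 0 := sub_ne_zero.mpr (Ne.symm hβone)
    set t : F := d * (1 - β)⁻¹ with ht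
    have ht0 : t ≠ 0 := mul_ne_zero hd (inv_ne_zero hc)
    have htd : t * (1 - β) = d := by rw [ht]; field_simp
    by_cases hts : IsSquare t
    · refine ⟨(t, t * β), ⟨⟨t, ht0, hts, rfl⟩, by dsimp only; linear_combination htd⟩, ?_⟩
      rintro ⟨p1, p2⟩ ⟨⟨x, hx, hxs, he⟩, hdiff⟩
      dsimp only at he hdiff ⊢
      rw [Sym2.eq_iff] at he
      rcases he with ⟨rfl, rfl⟩ | ⟨rfl, rfl⟩
      · have h1 : p1 * (1 - β) = t * (1 - β) := by rw [htd, ← hdiff]; ring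
        have h2 : p1 = t := mul_right_cancel₀ hc h1
        simp [h2]
      · exfalso
        have h1 : t * (1 - β) = (-p2) * (1 - β) := by rw [htd, ← hdiff]; ring
        have h2 : t = -p2 := mul_right_cancel₀ hc h1
        rw [h2, hneg p2 hx] at hts
        exact hts hxs
    · have hxs : IsSquare (-t) := (hneg t ht0).mpr hts
      have hx0 : -t ≠ 0 := neg_ne_zero.mpr ht0
      refine ⟨(-t * β, -t), ⟨⟨-t, hx0, hxs, by dsimp only; exact Sym2.eq_swap⟩,
        by dsimp only; linear_combination htd⟩, ?_⟩
      rintro ⟨p1, p2⟩ ⟨⟨x, hx, hxs', he⟩, hdiff⟩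
      dsimp only at he hdiff ⊢
      rw [Sym2.eq_iff] at he
      rcases he with ⟨rfl, rfl⟩ | ⟨rfl, rfl⟩
      · exfalso
        have h1 : p1 * (1 - β) = t * (1 - β) := by rw [htd, ← hdiff]; ring
        have h2 : p1 = t := mul_right_cancel₀ hc h1
        exact hts (h2 ▸ hxs')
      · have h1 : t * (1 - β) = (-p2) * (1 - β) := by rw [htd, ← hdiff]; ring
        have h2 : t = -p2 := mul_right_cancel₀ hc h1
        simp [h2]
  · -- sums nonzero
    rintro x y ⟨a, ha, has, he⟩
    have hb1 : (1 : F) + β ≠ 0 := by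
      intro h; exact hβ1 (by linear_combination h)
    have hsum : x + y = a * (1 + β) := by
      rw [Sym2.eq_iff] at he
      rcases he with ⟨rfl, rfl⟩ | ⟨rfl, rfl⟩ <;> ring
    rw [hsum]
    exact mul_ne_zero ha hb1
  · -- sums distinct
    rintro x y u v ⟨a, ha, has, hea⟩ ⟨b, hb, hbs, heb⟩ hsum
    have hb1 : (1 : F) + β ≠ 0 := by
      intro h; exact hβ1 (by linear_combination h)
    have h1 : x + y = a * (1 + β) := by
      rw [Sym2.eq_iff] at hea
      rcases hea with ⟨rfl, rfl⟩ | ⟨rfl, rfl⟩ <;> ring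
    have h2 : u + v = b * (1 + β) := by
      rw [Sym2.eq_iff] at heb
      rcases heb with ⟨rfl, rfl⟩ | ⟨rfl, rfl⟩ <;> ring
    have hab : a = b := by
      have := hsum
      rw [h1, h2] at this
      exact mul_right_cancel₀ hb1 this
    rw [hea, heb, hab]

end Paper
end

section
/- Let p be an odd prime and m a positive integer such that q = p^m = 2t + 1 > 3 with t odd (equivalently q ≡ 3 (mod 4)), and let r be a primitive root of the finite field F_q (a generator of the multiplicative group F_q*). Then S = {{r^{2i}, r^{2i+1}} : 0 ≤ i ≤ t − 1} is a strong starter for the additive group of F_q. -/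
open SimpleGraph

namespace Paper

variable {V : Type*} {Γ : Type*} {F : Type*}

/-- Mullin–Nemeth. Let `p` be an odd prime and `m ≥ 1` with
`q = p^m = 2t + 1 > 3`, `t` odd, and let `r` be a primitive root of `F_q`. Then
`S = {{r^{2i}, r^{2i+1}} : 0 ≤ i ≤ t - 1}` is a strong starter for the additive
group of `F_q`. -/
theorem statement_16 {F : Type*} [Field F] [Fintype F] (p m t : ℕ)
    (hp : p.Prime) (hpodd : Odd p) (hm : 0 < m)
    (hcard : Fintype.card F = p ^ m) (ht : p ^ m = 2 * t + 1) (htodd : Odd t)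
    (hq3 : 3 < p ^ m)
    (r : F) (hr : ∀ x : F, x ≠ 0 → ∃ n : ℕ, x = r ^ n) :
    IsStrongStarter {e : Sym2 F | ∃ i : ℕ, i < t ∧ e = s(r ^ (2 * i), r ^ (2 * i + 1))} := by
  classical
  have hFcard : Fintype.card F = 2 * t + 1 := hcard.trans ht
  have ht3 : 3 ≤ t := by
    have h1 : 3 < 2 * t + 1 := ht ▸ hq3
    rcases htodd with ⟨k, hk⟩
    omega
  -- r ≠ 0
  have hx : ∃ x : F, x ≠ 0 ∧ x ≠ 1 := by
    by_contra h
    push_neg at h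
    have hsub : (Finset.univ : Finset F) ⊆ {0, 1} := by
      intro x _
      by_cases h0 : x = 0
      · simp [h0]
      · simp [h x h0]
    have h2 : Fintype.card F ≤ 2 := by
      calc Fintype.card F = (Finset.univ : Finset F).card := (Finset.card_univ).symm
        _ ≤ ({0, 1} : Finset F).card := Finset.card_le_card hsub
        _ ≤ 2 := (Finset.card_insert_le _ _).trans (by simp)
    omega
  obtain ⟨x0, hx0, hx1⟩ := hx
  have hr0 : r ≠ 0 := by
    rintro rfl
    obtain ⟨n, hn⟩ := hr x0 hx0
    cases n with
    | zero => simp at hn; exact hx1 hn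
    | succ k => rw [zero_pow (Nat.succ_ne_zero k)] at hn; exact hx0 hn
  set u : Fˣ := Units.mk0 r hr0 with hu
  have huval : ∀ n : ℕ, ((u ^ n : Fˣ) : F) = r ^ n := by intro n; simp [hu]
  have hordu : orderOf u = 2 * t := by
    have hcu : Nat.card Fˣ = 2 * t := by
      rw [Nat.card_units, Nat.card_eq_fintype_card, hFcard]; omega
    rw [← hcu]
    apply orderOf_eq_card_of_forall_mem_zpowers
    intro v
    obtain ⟨n, hn⟩ := hr (v : F) (Units.ne_zero v)
    exact Subgroup.mem_zpowers_iff.mpr ⟨(n : ℤ), by ext; simp [hu, hn]⟩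
  have hpow : ∀ a b : ℕ, (r ^ a = r ^ b ↔ a ≡ b [MOD 2 * t]) := by
    intro a b
    constructor
    · intro h
      have h2 : u ^ a = u ^ b := Units.ext (by simpa [huval] using h)
      simpa [hordu] using pow_eq_pow_iff_modEq.1 h2
    · intro h
      have h2 : u ^ a = u ^ b := pow_eq_pow_iff_modEq.2 (by simpa [hordu] using h)
      simpa [huval] using congrArg Units.val h2
  have hinj : ∀ a b : ℕ, a < 2 * t → b < 2 * t → r ^ a = r ^ b → a = b := by
    intro a b ha hb h
    have h2 := (hpow a b).1 h
    rwa [Nat.ModEq, Nat.mod_eq_of_lt ha, Nat.mod_eq_of_lt hb] at h2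
  have hred : ∀ z : F, z ≠ 0 → ∃ n, n < 2 * t ∧ z = r ^ n := by
    intro z hz
    obtain ⟨n, hn⟩ := hr z hz
    exact ⟨n % (2 * t), Nat.mod_lt _ (by omega),
      by rw [hn]; exact (hpow n _).2 (Nat.mod_modEq n (2 * t)).symm⟩
  have hcyc : r ^ (2 * t) = 1 := by
    have h2 := (hpow (2 * t) 0).2 (by simp [Nat.ModEq])
    simpa using h2
  have hrt : r ^ t = -1 := by
    have h2 : r ^ t * r ^ t = 1 := by
      rw [← pow_add, show t + t = 2 * t by ring, hcyc]
    rcases mul_self_eq_one_iff.1 h2 with h1 | h1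
    · exact absurd (hinj t 0 (by omega) (by omega) (by simpa using h1)) (by omega)
    · exact h1
  have hr1 : r ≠ 1 := by
    intro h
    have h2 : (1 : ℕ) = 0 := hinj 1 0 (by omega) (by omega) (by simpa using h)
    omega
  have hrm1 : r ≠ -1 := by
    intro h
    have h2 : (1 : ℕ) = t := hinj 1 t (by omega) (by omega) (by rw [hrt]; simpa using h)
    omega
  have hone_sub : (1 : F) - r ≠ 0 := fun h => hr1 (by linear_combination -h)
  have hone_add : (1 : F) + r ≠ 0 := fun h => hrm1 (by linear_combination h)
  have hcancel : ∀ z : F, z * (1 - r)⁻¹ * (1 - r) = z := fun z => by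
    rw [mul_assoc, inv_mul_cancel₀ hone_sub, mul_one]
  have hpar : ∀ a b : ℕ, a ≡ b [MOD 2 * t] → a % 2 = b % 2 := by
    intro a b h
    have h2 := Nat.ModEq.of_dvd ⟨t, rfl⟩ h
    simpa [Nat.ModEq] using h2
  obtain ⟨t2, ht2eq⟩ := htodd
  have hnotboth : ∀ i j : ℕ, i < t → j < t → r ^ (2 * i) ≠ -(r ^ (2 * j)) := by
    intro i j hi hj h
    have h2 : r ^ (2 * i) = r ^ (2 * j + t) := by
      rw [pow_add, hrt, h]; ring
    have h3 := hpar _ _ ((hpow _ _).1 h2)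
    omega
  have hinj2 : ∀ i j : ℕ, i < t → j < t → r ^ (2 * i) = r ^ (2 * j) → i = j := by
    intro i j hi hj h
    have h2 := hinj (2 * i) (2 * j) (by omega) (by omega) h
    omega
  have heven : ∀ z : F, z ≠ 0 →
      (∃ i, i < t ∧ z = r ^ (2 * i)) ∨ (∃ i, i < t ∧ z = -(r ^ (2 * i))) := by
    intro z hz
    obtain ⟨n, hn, hzn⟩ := hred z hz
    rcases Nat.even_or_odd n with he | ho
    · obtain ⟨w, hw⟩ := he
      exact Or.inl ⟨n / 2, by omega, by rw [hzn]; congr 1; omega⟩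
    · obtain ⟨w, hw⟩ := ho
      right
      have hneg : -z = r ^ ((n + t) % (2 * t)) := by
        have h1 : -z = r ^ (n + t) := by rw [hzn, pow_add, hrt]; ring
        rw [h1]; exact (hpow _ _).2 (Nat.mod_modEq _ _).symm
      have hp2 : (n + t) % (2 * t) % 2 = 0 := by
        have h2 := hpar ((n + t) % (2 * t)) (n + t) (Nat.mod_modEq _ _)
        omega
      have hn'lt : (n + t) % (2 * t) < 2 * t := Nat.mod_lt _ (by omega)
      refine ⟨(n + t) % (2 * t) / 2, by omega, ?_⟩
      have hz' : z = -(r ^ ((n + t) % (2 * t))) := by rw [← hneg, neg_neg]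
      rw [hz']
      congr 2
      omega
  have hmem : ∀ x y : F,
      (s(x, y) ∈ {e : Sym2 F | ∃ i : ℕ, i < t ∧ e = s(r ^ (2 * i), r ^ (2 * i + 1))}) ↔
      ∃ i, i < t ∧ ((x = r ^ (2 * i) ∧ y = r ^ (2 * i + 1)) ∨
                    (x = r ^ (2 * i + 1) ∧ y = r ^ (2 * i))) := by
    intro x y
    constructor
    · rintro ⟨i, hi, he⟩
      exact ⟨i, hi, Sym2.eq_iff.1 he⟩
    · rintro ⟨i, hi, h⟩
      exact ⟨i, hi, Sym2.eq_iff.2 h⟩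
  refine ⟨⟨?_, ?_, ?_⟩, ?_, ?_⟩
  · -- each nonzero z in exactly one pair
    intro z hz
    obtain ⟨n, hn, hzn⟩ := hred z hz
    refine ⟨s(r ^ (2 * (n / 2)), r ^ (2 * (n / 2) + 1)), ⟨⟨n / 2, by omega, rfl⟩, ?_⟩, ?_⟩
    · rw [Sym2.mem_iff]
      rcases Nat.even_or_odd n with he | ho
      · obtain ⟨w, hw⟩ := he
        left; rw [hzn]; congr 1; omega
      · obtain ⟨w, hw⟩ := ho
        right; rw [hzn]; congr 1; omega
    · rintro e ⟨⟨j, hj, rfl⟩, hze⟩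
      rw [Sym2.mem_iff] at hze
      have hj' : j = n / 2 := by
        rcases hze with h | h
        · have h2 := hinj n (2 * j) hn (by omega) (by rw [← hzn]; exact h)
          omega
        · have h2 := hinj n (2 * j + 1) hn (by omega) (by rw [← hzn]; exact h)
          omega
      rw [hj']
  · -- all elements nonzero
    rintro e ⟨i, hi, rfl⟩ z hz
    rw [Sym2.mem_iff] at hz
    rcases hz with rfl | rfl <;> exact pow_ne_zero _ hr0
  · -- differences
    intro d hd
    have hw0 : d * (1 - r)⁻¹ ≠ 0 := mul_ne_zero hd (inv_ne_zero hone_sub)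
    rcases heven _ hw0 with ⟨i, hi, hwi⟩ | ⟨i, hi, hwi⟩
    · refine ⟨(r ^ (2 * i), r ^ (2 * i + 1)), ⟨⟨i, hi, rfl⟩, ?_⟩, ?_⟩
      · show r ^ (2 * i) - r ^ (2 * i + 1) = d
        rw [pow_succ, show r ^ (2*i) - r ^ (2*i) * r = r ^ (2*i) * (1 - r) by ring,
          ← hwi, hcancel]
      · rintro ⟨a, b⟩ ⟨hab, hd'⟩
        rcases (hmem a b).1 hab with ⟨j, hj, hc | hc⟩
        · have hdd : r ^ (2 * j) = d * (1 - r)⁻¹ := by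
            rw [← hd', hc.1, hc.2, pow_succ,
              show r ^ (2*j) - r ^ (2*j) * r = r ^ (2*j) * (1 - r) by ring,
              mul_assoc, mul_inv_cancel₀ hone_sub, mul_one]
          have hji : j = i := hinj2 j i hj hi (by rw [hdd, hwi])
          simp only [Prod.mk.injEq] at *
          exact ⟨by rw [hc.1, hji], by rw [hc.2, hji]⟩
        · exfalso
          have hdd : -(r ^ (2 * j)) = d * (1 - r)⁻¹ := by
            rw [← hd', hc.1, hc.2, pow_succ,
              show r ^ (2*j) * r - r ^ (2*j) = -(r ^ (2*j)) * (1 - r) by ring,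
              mul_assoc, mul_inv_cancel₀ hone_sub, mul_one]
          exact hnotboth i j hi hj (by rw [← hwi, ← hdd])
    · refine ⟨(r ^ (2 * i + 1), r ^ (2 * i)), ⟨⟨i, hi, Sym2.eq_swap⟩, ?_⟩, ?_⟩
      · show r ^ (2 * i + 1) - r ^ (2 * i) = d
        rw [pow_succ, show r ^ (2*i) * r - r ^ (2*i) = -(r ^ (2*i)) * (1 - r) by ring,
          ← hwi, hcancel]
      · rintro ⟨a, b⟩ ⟨hab, hd'⟩
        rcases (hmem a b).1 hab with ⟨j, hj, hc | hc⟩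
        · exfalso
          have hdd : r ^ (2 * j) = d * (1 - r)⁻¹ := by
            rw [← hd', hc.1, hc.2, pow_succ,
              show r ^ (2*j) - r ^ (2*j) * r = r ^ (2*j) * (1 - r) by ring,
              mul_assoc, mul_inv_cancel₀ hone_sub, mul_one]
          exact hnotboth j i hj hi (by rw [hdd, hwi])
        · have hdd : -(r ^ (2 * j)) = d * (1 - r)⁻¹ := by
            rw [← hd', hc.1, hc.2, pow_succ,
              show r ^ (2*j) * r - r ^ (2*j) = -(r ^ (2*j)) * (1 - r) by ring,
              mul_assoc, mul_inv_cancel₀ hone_sub, mul_one]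
          have hji : j = i := by
            apply hinj2 j i hj hi
            have h2 : -(r ^ (2 * j)) = -(r ^ (2 * i)) := by rw [hdd, hwi]
            exact neg_injective h2
          simp only [Prod.mk.injEq] at *
          exact ⟨by rw [hc.1, hji], by rw [hc.2, hji]⟩
  · -- sums nonzero
    intro x y hxy
    rcases (hmem x y).1 hxy with ⟨i, hi, h | h⟩
    · rw [h.1, h.2, pow_succ, show r ^ (2*i) + r ^ (2*i) * r = r ^ (2*i) * (1 + r) by ring]
      exact mul_ne_zero (pow_ne_zero _ hr0) hone_add
    · rw [h.1, h.2, pow_succ, show r ^ (2*i) * r + r ^ (2*i) = r ^ (2*i) * (1 + r) by ring]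
      exact mul_ne_zero (pow_ne_zero _ hr0) hone_add
  · -- sums distinct
    intro x y u v hxy huv hsum_eq
    obtain ⟨i, hi, hc1⟩ := (hmem x y).1 hxy
    obtain ⟨j, hj, hc2⟩ := (hmem u v).1 huv
    have h1 : x + y = r ^ (2 * i) * (1 + r) := by
      rcases hc1 with h | h <;> rw [h.1, h.2, pow_succ] <;> ring
    have h2 : u + v = r ^ (2 * j) * (1 + r) := by
      rcases hc2 with h | h <;> rw [h.1, h.2, pow_succ] <;> ring
    have h3 : r ^ (2 * i) = r ^ (2 * j) := by
      apply mul_right_cancel₀ hone_add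
      rw [← h1, ← h2, hsum_eq]
    have hij : i = j := hinj2 _ _ hi hj h3
    subst hij
    rcases hc1 with h | h <;> rcases hc2 with h' | h' <;>
      rw [h.1, h.2, h'.1, h'.2] <;> first | rfl | exact Sym2.eq_swap | exact Sym2.eq_swap.symm

end Paper
end

section
/- Let Γ be a finite additive abelian group of odd order n = 2k+1 and let S = {{x_i, y_i} : 1 ≤ i ≤ k} be a starter for Γ. For each γ ∈ Γ define F_γ = {{∞, γ}} ∪ {{x_i + γ, y_i + γ} : 1 ≤ i ≤ k}. Then {F_γ : γ ∈ Γ} is a one-factorization of the complete graph on the vertex set Γ ∪ {∞}: each F_γ is a perfect matching, distinct F_γ are edge-disjoint, and every edge of the complete graph lies in some F_γ. -/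
open SimpleGraph

namespace Paper

variable {V : Type*} {Γ : Type*} {F : Type*}

section Aux

variable [AddCommGroup Γ]

lemma starterFactor_adj_some_some (S : Set (Sym2 Γ)) (γ a b : Γ) :
    (starterFactor S γ).Adj (some a) (some b) ↔ a ≠ b ∧ s(a - γ, b - γ) ∈ S := by
  rw [starterFactor, fromEdgeSet_adj]
  constructor
  · rintro ⟨hmem, hne⟩
    refine ⟨fun h => hne (by rw [h]), ?_⟩
    rcases hmem with h | ⟨e, heS, he⟩
    · rcases Sym2.eq_iff.mp h with ⟨h1, _⟩ | ⟨_, h1⟩ <;> simp at h1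
    · obtain ⟨⟨x, y⟩, rfl⟩ := e.exists_rep
      have he' : s(some (x + γ), some (y + γ)) = s(some a, some b) := by
        rw [← Sym2.map_pair_eq]; exact he
      rcases Sym2.eq_iff.mp he' with ⟨h1, h2⟩ | ⟨h1, h2⟩ <;>
        rw [Option.some_inj] at h1 h2
      · have : a - γ = x ∧ b - γ = y := ⟨by rw [← h1]; abel, by rw [← h2]; abel⟩
        rw [this.1, this.2]; exact heS
      · have : a - γ = y ∧ b - γ = x := ⟨by rw [← h2]; abel, by rw [← h1]; abel⟩
        rw [this.1, this.2, Sym2.eq_swap]; exact heS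
  · rintro ⟨hab, hmem⟩
    refine ⟨Or.inr ⟨s(a - γ, b - γ), hmem, ?_⟩, by simpa using hab⟩
    rw [Sym2.map_pair_eq, sub_add_cancel, sub_add_cancel]

lemma starterFactor_adj_none_some (S : Set (Sym2 Γ)) (hS0 : ∀ e ∈ S, ∀ z ∈ e, z ≠ (0 : Γ))
    (γ b : Γ) : (starterFactor S γ).Adj none (some b) ↔ b = γ := by
  rw [starterFactor, fromEdgeSet_adj]
  constructor
  · rintro ⟨hmem, _⟩
    rcases hmem with h | ⟨e, heS, he⟩
    · rcases Sym2.eq_iff.mp h with ⟨_, h2⟩ | ⟨h1, _⟩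
      · exact Option.some_inj.mp h2
      · exact absurd h1 (by simp)
    · exfalso
      obtain ⟨⟨x, y⟩, rfl⟩ := e.exists_rep
      have he' : s(some (x + γ), some (y + γ)) = s(none, some b) := by
        rw [← Sym2.map_pair_eq]; exact he
      rcases Sym2.eq_iff.mp he' with ⟨h1, _⟩ | ⟨_, h1⟩ <;> simp at h1
  · rintro rfl
    exact ⟨Or.inl rfl, by simp⟩

lemma starterFactor_not_adj_none_none (S : Set (Sym2 Γ)) (γ : Γ) :
    ¬ (starterFactor S γ).Adj none none := fun h => h.ne rfl

/-- A starter contains no diagonal pair `{z, z}`. -/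
lemma starter_no_diag (S : Set (Sym2 Γ)) [Fintype Γ] (hS : IsStarter S) (z : Γ) (hz : z ≠ 0) :
    s(z, z) ∉ S := by
  obtain ⟨h1, h2, h3⟩ := hS
  intro hmem
  -- the map sending each nonzero difference `d` to the first coordinate of its
  -- unique ordered pair is injective, hence surjective
  have hchoice : ∀ d : {d : Γ // d ≠ 0}, ∃ p : Γ × Γ, s(p.1, p.2) ∈ S ∧ p.1 - p.2 = d.1 :=
    fun d => (h3 d.1 d.2).exists
  choose p hp hpd using hchoice
  have hfst_ne : ∀ d, (p d).1 ≠ 0 := fun d =>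
    h2 _ (hp d) _ (Sym2.mem_mk_left _ _)
  let g : {d : Γ // d ≠ 0} → {d : Γ // d ≠ 0} := fun d => ⟨(p d).1, hfst_ne d⟩
  have hginj : Function.Injective g := by
    intro d e hde
    have hx : (p d).1 = (p e).1 := congrArg Subtype.val hde
    have hd := h1 (p d).1 (hfst_ne d)
    have heq : s((p d).1, (p d).2) = s((p e).1, (p e).2) := by
      have h1d := hd.unique ⟨hp d, Sym2.mem_mk_left _ _⟩
        (by rw [hx]; exact ⟨hp e, Sym2.mem_mk_left _ _⟩)
      exact h1d
    rcases Sym2.eq_iff.mp heq with ⟨_, hsnd⟩ | ⟨hxy, hyx⟩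
    · apply Subtype.ext
      calc (d : Γ) = (p d).1 - (p d).2 := (hpd d).symm
        _ = (p e).1 - (p e).2 := by rw [hx, hsnd]
        _ = (e : Γ) := hpd e
    · exfalso
      have hdd : (p d).1 = (p d).2 := by rw [hx, ← hyx]
      have hthis := hpd d
      rw [hdd, sub_self] at hthis
      exact d.2 hthis.symm
  have hgsurj : Function.Surjective g := Finite.injective_iff_surjective.mp hginj
  obtain ⟨d, hd⟩ := hgsurj ⟨z, hz⟩
  have hx : (p d).1 = z := congrArg Subtype.val hd
  -- the pair for `d` is `{z, (p d).2}` with `(p d).2 ≠ z`, but `{z,z} ∈ S` also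
  -- contains `z`, contradicting uniqueness
  have hne : (p d).2 ≠ z := by
    intro h
    have := hpd d
    rw [hx, h, sub_self] at this
    exact d.2 this.symm
  have huniq := (h1 z hz).unique
    (⟨hp d, by rw [hx]; exact Sym2.mem_mk_left _ _⟩ :
      s((p d).1, (p d).2) ∈ S ∧ z ∈ s((p d).1, (p d).2))
    ⟨hmem, Sym2.mem_mk_left _ _⟩
  rcases Sym2.eq_iff.mp huniq with ⟨_, h2'⟩ | ⟨_, h2'⟩ <;> exact hne h2'

end Aux

/-- Let `Γ` be a finite additive abelian group of odd order
`n = 2k + 1` and let `S` be a starter for `Γ`. Then the translates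
`F_γ = {{∞, γ}} ∪ {{x + γ, y + γ} : {x, y} ∈ S}`, for `γ ∈ Γ`, form a
one-factorization of the complete graph on `Γ ∪ {∞}`: each `F_γ` is a perfect
matching, distinct `F_γ` are edge-disjoint, and every edge of the complete graph
lies in some `F_γ`. -/
theorem statement_17 {Γ : Type*} [AddCommGroup Γ] [Fintype Γ] (k : ℕ)
    (hcard : Fintype.card Γ = 2 * k + 1) (S : Set (Sym2 Γ)) (hS : IsStarter S) :
    (∀ γ : Γ, IsOneFactor (starterFactor S γ)) ∧
      (∀ γ δ : Γ, γ ≠ δ →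
        Disjoint (starterFactor S γ).edgeSet (starterFactor S δ).edgeSet) ∧
      (∀ u v : Option Γ, u ≠ v → ∃ γ : Γ, (starterFactor S γ).Adj u v) := by
  obtain ⟨h1, h2, h3⟩ := hS
  have hsymm : ∀ γ a b, (starterFactor S γ).Adj (some a) (some b) ↔
      a ≠ b ∧ s(a - γ, b - γ) ∈ S := fun γ a b => starterFactor_adj_some_some S γ a b
  have hnone : ∀ γ b, (starterFactor S γ).Adj none (some b) ↔ b = γ :=
    fun γ b => starterFactor_adj_none_some S h2 γ b
  refine ⟨?_, ?_, ?_⟩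
  · -- each translate is a one-factor
    intro γ v
    match v with
    | none =>
      refine ⟨some γ, (hnone γ γ).mpr rfl, ?_⟩
      intro w hw
      match w with
      | none => exact absurd hw (starterFactor_not_adj_none_none S γ)
      | some b => rw [(hnone γ b).mp hw]
    | some a =>
      by_cases ha : a = γ
      · subst ha
        refine ⟨none, ((hnone a a).mpr rfl).symm, ?_⟩
        intro w hw
        match w with
        | none => rfl
        | some b =>
          exfalso
          obtain ⟨_, hmem⟩ := (hsymm a a b).mp hw
          rw [sub_self] at hmem
          exact h2 _ hmem 0 (Sym2.mem_mk_left _ _) rfl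
      · have haγ : a - γ ≠ 0 := sub_ne_zero.mpr ha
        obtain ⟨e, ⟨heS, hae⟩, huniq⟩ := h1 (a - γ) haγ
        have hospec := Sym2.other_spec hae
        set c := Sym2.Mem.other hae with hc
        have heq : e = s(a - γ, c) := hospec.symm
        have hac : a ≠ c + γ := by
          intro h
          have : c = a - γ := by rw [h]; abel
          rw [this] at heq
          exact starter_no_diag S ⟨h1, h2, h3⟩ (a - γ) haγ (heq ▸ heS)
        refine ⟨some (c + γ), (hsymm γ a (c + γ)).mpr ⟨hac, ?_⟩, ?_⟩
        · have : c + γ - γ = c := by abel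
          rw [this, ← heq]; exact heS
        · intro w hw
          match w with
          | none =>
            exact absurd ((hnone γ a).mp hw.symm) ha
          | some b =>
            obtain ⟨hab, hmem⟩ := (hsymm γ a b).mp hw
            have := huniq s(a - γ, b - γ) ⟨hmem, Sym2.mem_mk_left _ _⟩
            rw [heq] at this
            rcases Sym2.eq_iff.mp this with ⟨_, hbc⟩ | ⟨_, hac'⟩
            · rw [Option.some_inj, ← hbc]; abel
            · exact absurd (sub_left_inj.mp hac').symm hab
  · -- edge-disjointness
    intro γ δ hγδ
    rw [Set.disjoint_left]
    intro e heγ heδ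
    obtain ⟨⟨u, v⟩, rfl⟩ := e.exists_rep
    have hadjγ : (starterFactor S γ).Adj u v := heγ
    have hadjδ : (starterFactor S δ).Adj u v := heδ
    match u, v with
    | none, none => exact starterFactor_not_adj_none_none S γ hadjγ
    | none, some b =>
      exact hγδ (((hnone γ b).mp hadjγ).symm.trans ((hnone δ b).mp hadjδ))
    | some a, none =>
      exact hγδ (((hnone γ a).mp hadjγ.symm).symm.trans ((hnone δ a).mp hadjδ.symm))
    | some a, some b =>
      obtain ⟨hab, hmemγ⟩ := (hsymm γ a b).mp hadjγ
      obtain ⟨_, hmemδ⟩ := (hsymm δ a b).mp hadjδ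
      have hd : a - b ≠ 0 := sub_ne_zero.mpr hab
      have huniq := (h3 (a - b) hd).unique
        (⟨hmemγ, by dsimp only; abel⟩ : s((a - γ, b - γ).1, (a - γ, b - γ).2) ∈ S ∧
          (a - γ, b - γ).1 - (a - γ, b - γ).2 = a - b)
        (⟨hmemδ, by dsimp only; abel⟩ : s((a - δ, b - δ).1, (a - δ, b - δ).2) ∈ S ∧
          (a - δ, b - δ).1 - (a - δ, b - δ).2 = a - b)
      have : a - γ = a - δ := congrArg Prod.fst huniq
      exact hγδ (sub_right_inj.mp this)
  · -- every edge is covered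
    intro u v huv
    match u, v with
    | none, none => exact absurd rfl huv
    | none, some b => exact ⟨b, (hnone b b).mpr rfl⟩
    | some a, none => exact ⟨a, ((hnone a a).mpr rfl).symm⟩
    | some a, some b =>
      have hab : a ≠ b := fun h => huv (by rw [h])
      have hd : a - b ≠ 0 := sub_ne_zero.mpr hab
      obtain ⟨⟨x, y⟩, ⟨hxyS, hxyd⟩, _⟩ := h3 (a - b) hd
      refine ⟨a - x, (hsymm (a - x) a b).mpr ⟨hab, ?_⟩⟩
      have h1' : a - (a - x) = x := by abel
      have h2' : b - (a - x) = y := by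
        have : x - y = a - b := hxyd
        have : y = x - (a - b) := by rw [← this]; abel
        rw [this]; abel
      rw [h1', h2']
      exact hxyS

end Paper
end
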